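/- Let Y be a countably generated Hilbert 𝔄-module and Ω ⊆ B(Y) be norm separable and quasidiagonal. Then there exists an increasing sequence (Pₙ) of finite rank projections in B(Y), converging strongly to the identity on Y, such that ‖[Pₙ, T]‖ → 0 as n → ∞ for every T ∈ Ω. -/

import Mathlib

open Filter Topology

noncomputable section

/-- A positive element of a `*`-ring: one of the form `star b * b`. -/
def IsPosElem {R : Type} [Mul R] [Star R] (x : R) : Prop := ∃ b : R, x = star b * b

/-- Positivity for an `n × n` matrix over a `*`-ring, phrased entrywise:
`M = star b * b` for some rectangular matrix `b`. -/
def MatPos {R : Type} [AddCommMonoid R] [Mul R] [Star R] {n : ℕ}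
    (M : Fin n → Fin n → R) : Prop :=
  ∃ (m : ℕ) (b : Fin m → Fin n → R), ∀ i j, M i j = ∑ k, star (b k i) * b k j

/-- A map between `*`-rings is completely positive if all its amplifications map
positive matrices to positive matrices. -/
def IsCPMap {R Z : Type} [AddCommMonoid R] [Mul R] [Star R]
    [AddCommMonoid Z] [Mul Z] [Star Z] (φ : R → Z) : Prop :=
  ∀ (n : ℕ) (M : Fin n → Fin n → R), MatPos M → MatPos (fun i j => φ (M i j))

variable (𝔄 A : Type) [NonUnitalCStarAlgebra 𝔄] [NonUnitalCStarAlgebra A]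

/-- A compatible right Banach `𝔄`-module structure on the C*-algebra `A`,
making `A` an `𝔄`-C*-module. -/
structure CStarAction where
  act : A → 𝔄 → A
  act_add : ∀ (a : A) (α β : 𝔄), act a (α + β) = act a α + act a β
  add_act : ∀ (a b : A) (α : 𝔄), act (a + b) α = act a α + act b α
  act_smulC : ∀ (c : ℂ) (a : A) (α : 𝔄), act a (c • α) = c • act a α
  smulC_act : ∀ (c : ℂ) (a : A) (α : 𝔄), act (c • a) α = c • act a α
  norm_act : ∀ (a : A) (α : 𝔄), ‖act a α‖ ≤ ‖a‖ * ‖α‖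
  mul_act : ∀ (a b : A) (α : 𝔄), act (a * b) α = a * act b α
  act_mul : ∀ (a : A) (α β : 𝔄), act a (α * β) = act (act a α) β
  star_compat : ∀ (a : A) (α β : 𝔄),
    act (star (act (star a) (star α))) β = star (act (star (act a β)) (star α))

variable {𝔄 A}

/-- The associated left action `α • a := (a* • α*)*`. -/
def CStarAction.lact (S : CStarAction 𝔄 A) (α : 𝔄) (a : A) : A :=
  star (S.act (star a) (star α))

/-- The action is non degenerate if `a • α = 0` for all `a` forces `α = 0`. -/
def CStarAction.NonDegenerate (S : CStarAction 𝔄 A) : Prop :=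
  ∀ α : 𝔄, (∀ a : A, S.act a α = 0) → α = 0

/-- The two-sided action is a biaction: `(a • α) b = a (α • b)`. -/
def CStarAction.Biaction (S : CStarAction 𝔄 A) : Prop :=
  ∀ (a : A) (α : 𝔄) (b : A), S.act a α * b = a * S.lact α b

/-- An `𝔄`-retraction: a positive right `𝔄`-module map `τ : A → 𝔄` with strictly dense
image such that `τ` sends some bounded approximate identity of `A` strictly to a
projection `p` of `𝔄`.  (Nets are encoded by filters.) -/
structure IsRetraction (S : CStarAction 𝔄 A) (τ : A → 𝔄) : Prop where
  map_add : ∀ a b : A, τ (a + b) = τ a + τ b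
  map_smulC : ∀ (c : ℂ) (a : A), τ (c • a) = c • τ a
  pos : ∀ a : A, IsPosElem (τ (star a * a))
  map_act : ∀ (a : A) (α : 𝔄), τ (S.act a α) = τ a * α
  strict_dense : ∀ (β : 𝔄) (ε : ℝ), 0 < ε → ∀ s : Finset 𝔄,
    ∃ a : A, ∀ α ∈ s, ‖τ (S.act a α) - β * α‖ < ε
  bai : ∃ (l : Filter A) (p : 𝔄), l.NeBot ∧ (∃ C : ℝ, ∀ᶠ e in l, ‖e‖ ≤ C) ∧
    (∀ a : A, Tendsto (fun e => e * a) l (𝓝 a)) ∧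
    (∀ a : A, Tendsto (fun e => a * e) l (𝓝 a)) ∧
    star p = p ∧ p * p = p ∧
    (∀ α : 𝔄, Tendsto (fun e => τ e * α) l (𝓝 (p * α))) ∧
    (∀ α : 𝔄, Tendsto (fun e => α * τ e) l (𝓝 (α * p)))

/-- An `𝔄`-trace: a tracial `𝔄`-retraction. -/
structure IsATrace (S : CStarAction 𝔄 A) (τ : A → 𝔄) extends IsRetraction S τ : Prop where
  tracial : ∀ a b : A, τ (a * b) = τ (b * a)

/-! ### Hilbert C*-modules, adjointable operators, correspondences -/

variable (𝔄 : Type) [NonUnitalCStarAlgebra 𝔄]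

/-- A (right) Hilbert `𝔄`-module structure on a complete normed space `X`. -/
structure HilbertModuleStr (X : Type) [NormedAddCommGroup X] [NormedSpace ℂ X]
    [CompleteSpace X] where
  smul : X → 𝔄 → X
  add_smul : ∀ (x y : X) (α : 𝔄), smul (x + y) α = smul x α + smul y α
  smul_add : ∀ (x : X) (α β : 𝔄), smul x (α + β) = smul x α + smul x β
  smulC_smul : ∀ (c : ℂ) (x : X) (α : 𝔄), smul (c • x) α = c • smul x α
  smul_smulC : ∀ (c : ℂ) (x : X) (α : 𝔄), smul x (c • α) = c • smul x α
  smul_mul : ∀ (x : X) (α β : 𝔄), smul x (α * β) = smul (smul x α) β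
  inner : X → X → 𝔄
  inner_add_left : ∀ x y z : X, inner (x + y) z = inner x z + inner y z
  inner_add_right : ∀ x y z : X, inner x (y + z) = inner x y + inner x z
  inner_smulC_right : ∀ (c : ℂ) (x y : X), inner x (c • y) = c • inner x y
  inner_smulC_left : ∀ (c : ℂ) (x y : X), inner (c • x) y = (starRingEnd ℂ c) • inner x y
  inner_smul_right : ∀ (x y : X) (α : 𝔄), inner x (smul y α) = inner x y * α
  inner_star : ∀ x y : X, star (inner x y) = inner y x
  inner_pos : ∀ x : X, IsPosElem (inner x x)
  norm_inner : ∀ x : X, ‖x‖ ^ 2 = ‖inner x x‖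

variable {𝔄}
variable {X : Type} [NormedAddCommGroup X] [NormedSpace ℂ X] [CompleteSpace X]

namespace HilbertModuleStr

variable (H : HilbertModuleStr 𝔄 X)

theorem inner_smul_left (x y : X) (α : 𝔄) :
    H.inner (H.smul x α) y = star α * H.inner x y := by
  rw [← H.inner_star, H.inner_smul_right, star_mul, H.inner_star]

theorem inner_zero_left (y : X) : H.inner 0 y = 0 := by
  have h := H.inner_add_left 0 0 y
  rw [add_zero] at h
  simpa using h

theorem inner_zero_right (x : X) : H.inner x 0 = 0 := by
  rw [← H.inner_star, H.inner_zero_left, star_zero]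

theorem inner_neg_left (x y : X) : H.inner (-x) y = -H.inner x y := by
  have : (-x : X) = ((-1 : ℂ) • x) := by simp
  rw [this, H.inner_smulC_left]; simp

theorem inner_neg_right (x y : X) : H.inner x (-y) = -H.inner x y := by
  have : (-y : X) = ((-1 : ℂ) • y) := by simp
  rw [this, H.inner_smulC_right]; simp

theorem inner_sub_left (x y z : X) : H.inner (x - y) z = H.inner x z - H.inner y z := by
  rw [sub_eq_add_neg, H.inner_add_left, H.inner_neg_left, sub_eq_add_neg]

theorem inner_sub_right (x y z : X) : H.inner x (y - z) = H.inner x y - H.inner x z := by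
  rw [sub_eq_add_neg, H.inner_add_right, H.inner_neg_right, sub_eq_add_neg]

end HilbertModuleStr

/-- A bounded adjointable operator on a Hilbert `𝔄`-module. -/
structure Adj (H : HilbertModuleStr 𝔄 X) where
  toFun : X → X
  adjFun : X → X
  inner_adj : ∀ x y : X, H.inner (toFun x) y = H.inner x (adjFun y)

namespace Adj

variable {H : HilbertModuleStr 𝔄 X}

theorem ext' {S T : Adj H} (h1 : S.toFun = T.toFun) (h2 : S.adjFun = T.adjFun) : S = T := by
  cases S; cases T; simp_all

instance : Add (Adj H) :=
  ⟨fun S T =>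
    { toFun := fun x => S.toFun x + T.toFun x
      adjFun := fun x => S.adjFun x + T.adjFun x
      inner_adj := fun x y => by
        rw [H.inner_add_left, H.inner_add_right, S.inner_adj, T.inner_adj] }⟩

instance : Zero (Adj H) :=
  ⟨{ toFun := fun _ => 0
     adjFun := fun _ => 0
     inner_adj := fun x y => by rw [H.inner_zero_left, H.inner_zero_right] }⟩

instance : Neg (Adj H) :=
  ⟨fun S =>
    { toFun := fun x => -S.toFun x
      adjFun := fun x => -S.adjFun x
      inner_adj := fun x y => by
        rw [H.inner_neg_left, H.inner_neg_right, S.inner_adj] }⟩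

instance : Sub (Adj H) :=
  ⟨fun S T =>
    { toFun := fun x => S.toFun x - T.toFun x
      adjFun := fun x => S.adjFun x - T.adjFun x
      inner_adj := fun x y => by
        rw [H.inner_sub_left, H.inner_sub_right, S.inner_adj, T.inner_adj] }⟩

instance : SMul ℂ (Adj H) :=
  ⟨fun c S =>
    { toFun := fun x => c • S.toFun x
      adjFun := fun x => (starRingEnd ℂ c) • S.adjFun x
      inner_adj := fun x y => by
        rw [H.inner_smulC_left, H.inner_smulC_right, S.inner_adj] }⟩

instance : Mul (Adj H) :=
  ⟨fun S T =>
    { toFun := fun x => S.toFun (T.toFun x)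
      adjFun := fun x => T.adjFun (S.adjFun x)
      inner_adj := fun x y => by rw [S.inner_adj, T.inner_adj] }⟩

instance : One (Adj H) :=
  ⟨{ toFun := id
     adjFun := id
     inner_adj := fun _ _ => rfl }⟩

instance : Star (Adj H) :=
  ⟨fun S =>
    { toFun := S.adjFun
      adjFun := S.toFun
      inner_adj := fun x y =>
        calc H.inner (S.adjFun x) y = star (H.inner y (S.adjFun x)) := (H.inner_star _ _).symm
          _ = star (H.inner (S.toFun y) x) := by rw [S.inner_adj]
          _ = H.inner x (S.toFun y) := H.inner_star _ _ }⟩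

@[simp] theorem add_toFun (S T : Adj H) (x : X) : (S + T).toFun x = S.toFun x + T.toFun x := rfl
@[simp] theorem add_adjFun (S T : Adj H) (x : X) :
    (S + T).adjFun x = S.adjFun x + T.adjFun x := rfl
@[simp] theorem zero_toFun (x : X) : (0 : Adj H).toFun x = 0 := rfl
@[simp] theorem zero_adjFun (x : X) : (0 : Adj H).adjFun x = 0 := rfl

instance : AddCommMonoid (Adj H) where
  add_assoc S T U := ext' (funext fun x => add_assoc _ _ _) (funext fun x => add_assoc _ _ _)
  zero_add S := ext' (funext fun x => zero_add _) (funext fun x => zero_add _)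
  add_zero S := ext' (funext fun x => add_zero _) (funext fun x => add_zero _)
  add_comm S T := ext' (funext fun x => add_comm _ _) (funext fun x => add_comm _ _)
  nsmul := nsmulRec

/-- The operator norm of a (automatically bounded) adjointable operator. -/
noncomputable instance : Norm (Adj H) := ⟨fun T => ⨆ x : X, ‖T.toFun x‖ / ‖x‖⟩

end Adj

/-- The commutant of a set of adjointable operators. -/
def Commutant {H : HilbertModuleStr 𝔄 X} (Ω : Set (Adj H)) : Set (Adj H) :=
  {T | ∀ U ∈ Ω, T * U = U * T}

/-! ### Quasidiagonality in Hilbert `𝔄`-modules -/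

section QD

variable {X : Type} [NormedAddCommGroup X] [NormedSpace ℂ X] [CompleteSpace X]

/-- The closed `𝔄`-submodule of a Hilbert `𝔄`-module generated by a set. -/
def GenSubmodule (H : HilbertModuleStr 𝔄 X) (G : Set X) : Set X :=
  ⋂₀ {S : Set X | IsClosed S ∧ G ⊆ S ∧ (0 : X) ∈ S ∧
    (∀ x ∈ S, ∀ y ∈ S, x + y ∈ S) ∧
    (∀ (c : ℂ), ∀ x ∈ S, c • x ∈ S) ∧
    (∀ x ∈ S, ∀ α : 𝔄, H.smul x α ∈ S)}

/-- A finite rank operator: one whose range is a finitely generated closed submodule. -/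
def IsFiniteRank {H : HilbertModuleStr 𝔄 X} (T : Adj H) : Prop :=
  ∃ (n : ℕ) (v : Fin n → X), Set.range T.toFun = GenSubmodule H (Set.range v)

/-- A projection among adjointable operators. -/
def IsProjection {H : HilbertModuleStr 𝔄 X} (P : Adj H) : Prop :=
  P * P = P ∧ star P = P

/-- A set `Ω ⊆ B(Y)` is quasidiagonal if, for finitely many operators in `Ω`, finitely
many vectors and `ε > 0`, there is a finite rank projection `P` with `‖PT − TP‖ < ε`
on the given operators and `P = I` on the given vectors. -/
def QDSet {H : HilbertModuleStr 𝔄 X} (Ω : Set (Adj H)) : Prop :=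
  ∀ (n m : ℕ) (T : Fin n → Adj H), (∀ i, T i ∈ Ω) →
    ∀ (y : Fin m → X) (ε : ℝ), 0 < ε →
      ∃ P : Adj H, IsProjection P ∧ IsFiniteRank P ∧
        (∀ i, ‖P * T i - T i * P‖ < ε) ∧ (∀ j, P.toFun (y j) = y j)

/-- The countably generated Hilbert `𝔄`-modules. -/
def CountablyGenerated (H : HilbertModuleStr 𝔄 X) : Prop :=
  ∃ g : ℕ → X, GenSubmodule H (Set.range g) = Set.univ

end QD

section AuxLemmas

variable {𝔄 : Type} [NonUnitalCStarAlgebra 𝔄]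
variable {X : Type} [NormedAddCommGroup X] [NormedSpace ℂ X] [CompleteSpace X]

namespace HilbertModuleStr

variable (H : HilbertModuleStr 𝔄 X)

theorem zero_smul' (α : 𝔄) : H.smul 0 α = 0 := by
  have h := H.add_smul 0 0 α
  rw [add_zero] at h
  exact right_eq_add.mp h

theorem neg_smul' (x : X) (α : 𝔄) : H.smul (-x) α = -H.smul x α := by
  have h : (-x : X) = ((-1 : ℂ) • x) := by simp
  rw [h, H.smulC_smul]; simp

theorem sub_smul' (x y : X) (α : 𝔄) : H.smul (x - y) α = H.smul x α - H.smul y α := by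
  rw [sub_eq_add_neg, H.add_smul, H.neg_smul', sub_eq_add_neg]

theorem eq_zero_of_inner_self (x : X) (h : H.inner x x = 0) : x = 0 := by
  have h2 := H.norm_inner x
  rw [h, norm_zero] at h2
  exact norm_eq_zero.mp (pow_eq_zero_iff two_ne_zero |>.mp h2)

theorem eq_of_inner_left (w w' : X) (h : ∀ z, H.inner w z = H.inner w' z) : w = w' := by
  have h1 : H.inner (w - w') (w - w') = 0 := by
    rw [H.inner_sub_left, h (w - w'), sub_self]
  have := H.eq_zero_of_inner_self _ h1
  exact sub_eq_zero.mp this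

/-- Cauchy–Schwarz for Hilbert C*-modules. -/
theorem norm_inner_le' (x y : X) : ‖H.inner x y‖ ≤ ‖x‖ * ‖y‖ := by
  rcases eq_or_ne x 0 with rfl | hx
  · rw [H.inner_zero_left, norm_zero]
    positivity
  · set a := H.inner x y with ha
    set t : ℝ := ‖x‖ ^ 2 with htdef
    have ht : 0 < t := pow_pos (norm_pos_iff.mpr hx) 2
    set z : X := H.smul x a - ((t : ℂ)) • y with hzdef
    have h1 : H.inner (H.smul x a) (H.smul x a) = star a * (H.inner x x * a) := by
      rw [H.inner_smul_left, H.inner_smul_right]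
    have h2 : H.inner (H.smul x a) ((t : ℂ) • y) = (t : ℂ) • (star a * a) := by
      rw [H.inner_smulC_right, H.inner_smul_left, ← ha]
    have h3 : H.inner ((t : ℂ) • y) (H.smul x a) = (t : ℂ) • (star a * a) := by
      rw [H.inner_smulC_left, H.inner_smul_right, ← H.inner_star x y, ← ha]
      simp [Complex.conj_ofReal]
    have h4 : H.inner ((t : ℂ) • y) ((t : ℂ) • y) = (t : ℂ) • ((t : ℂ) • H.inner y y) := by
      rw [H.inner_smulC_left, H.inner_smulC_right]
      simp [Complex.conj_ofReal]
    have hz : H.inner z z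
        = star a * (H.inner x x * a) - (t : ℂ) • (star a * a)
          - ((t : ℂ) • (star a * a) - (t : ℂ) • ((t : ℂ) • H.inner y y)) := by
      rw [hzdef, H.inner_sub_left, H.inner_sub_right, H.inner_sub_right, h1, h2, h3, h4]
    -- move to the unitization
    let J : 𝔄 →⋆ₙₐ[ℂ] Unitization ℂ 𝔄 := Unitization.inrNonUnitalStarAlgHom ℂ 𝔄
    letI := CStarAlgebra.spectralOrder (Unitization ℂ 𝔄)
    letI := CStarAlgebra.spectralOrderedRing (Unitization ℂ 𝔄)
    have hJnorm : ∀ α : 𝔄, ‖J α‖ = ‖α‖ := fun α => Unitization.norm_inr α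
    have hpos : (0 : Unitization ℂ 𝔄) ≤ J (H.inner z z) := by
      obtain ⟨b, hb⟩ := H.inner_pos z
      rw [hb, map_mul, map_star]
      exact star_mul_self_nonneg _
    have hmap : J (H.inner z z)
        = star (J a) * (J (H.inner x x) * J a) - t • (star (J a) * J a)
          - (t • (star (J a) * J a) - t • (t • J (H.inner y y))) := by
      have hJsmul : ∀ (r : ℝ) (α : 𝔄), J (r • α) = r • J α := fun r α => by
        simp [J, Unitization.inr_smul]
      rw [hz]
      simp only [map_sub, map_mul, map_star, Complex.coe_smul, hJsmul]
    have hsa : IsSelfAdjoint (J (H.inner x x)) := by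
      rw [IsSelfAdjoint, ← map_star, H.inner_star]
    have hconj : star (J a) * J (H.inner x x) * J a ≤ t • (star (J a) * J a) := by
      have hb := CStarAlgebra.star_left_conjugate_le_norm_smul (a := J a) (b := J (H.inner x x)) hsa
      rwa [hJnorm, ← H.norm_inner, ← htdef] at hb
    have h5 : t • (star (J a) * J a) - t • (t • J (H.inner y y))
        ≤ star (J a) * (J (H.inner x x) * J a) - t • (star (J a) * J a) :=
      sub_nonneg.mp (hmap ▸ hpos)
    have h6 : star (J a) * (J (H.inner x x) * J a) - t • (star (J a) * J a) ≤ 0 :=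
      sub_nonpos.mpr (by rw [← mul_assoc]; exact hconj)
    have h7 : t • (star (J a) * J a) ≤ t • (t • J (H.inner y y)) :=
      sub_nonpos.mp (h5.trans h6)
    have h0 : (0 : Unitization ℂ 𝔄) ≤ t • (star (J a) * J a) := by
      have hsq : t • (star (J a) * J a)
          = star (((Real.sqrt t : ℝ) : ℂ) • J a) * (((Real.sqrt t : ℝ) : ℂ) • J a) := by
        rw [star_smul, smul_mul_smul_comm]
        rw [show star (((Real.sqrt t : ℝ) : ℂ)) = ((Real.sqrt t : ℝ) : ℂ) by
          simp [Complex.star_def, Complex.conj_ofReal]]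
        rw [← Complex.ofReal_mul, Real.mul_self_sqrt ht.le, Complex.coe_smul]
      rw [hsq]
      exact star_mul_self_nonneg _
    have hnle := CStarAlgebra.norm_le_norm_of_nonneg_of_le h0 h7
    rw [norm_smul, norm_smul, norm_smul, CStarRing.norm_star_mul_self, hJnorm, hJnorm] at hnle
    have htt : ‖t‖ = t := Real.norm_of_nonneg ht.le
    rw [htt, ← H.norm_inner] at hnle
    have h8 : ‖a‖ * ‖a‖ ≤ t * ‖y‖ ^ 2 := by
      have := (mul_le_mul_iff_right₀ ht).mp hnle
      simpa using this
    have h9 : ‖a‖ ^ 2 ≤ (‖x‖ * ‖y‖) ^ 2 := by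
      rw [htdef] at h8; nlinarith [norm_nonneg a]
    exact (pow_le_pow_iff_left₀ (norm_nonneg a)
      (mul_nonneg (norm_nonneg x) (norm_nonneg y)) two_ne_zero).mp h9

theorem norm_smul_le' (x : X) (α : 𝔄) : ‖H.smul x α‖ ≤ ‖x‖ * ‖α‖ := by
  have h : ‖H.smul x α‖ ^ 2 = ‖star α * (H.inner x x * α)‖ := by
    rw [H.norm_inner, H.inner_smul_left, H.inner_smul_right]
  have h2 : ‖star α * (H.inner x x * α)‖ ≤ ‖α‖ * (‖x‖ ^ 2 * ‖α‖) := by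
    calc ‖star α * (H.inner x x * α)‖ ≤ ‖star α‖ * ‖H.inner x x * α‖ := norm_mul_le _ _
      _ ≤ ‖star α‖ * (‖H.inner x x‖ * ‖α‖) := by
          gcongr; exact norm_mul_le _ _
      _ = ‖α‖ * (‖x‖ ^ 2 * ‖α‖) := by rw [norm_star, ← H.norm_inner]
  have h3 : ‖H.smul x α‖ ^ 2 ≤ (‖x‖ * ‖α‖) ^ 2 := by rw [h]; nlinarith [norm_nonneg α, norm_nonneg x]
  exact (pow_le_pow_iff_left₀ (norm_nonneg _)
    (mul_nonneg (norm_nonneg x) (norm_nonneg α)) two_ne_zero).mp h3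

theorem inner_tendsto_left {u : ℕ → X} {x : X} (hu : Filter.Tendsto u Filter.atTop (𝓝 x))
    (z : X) : Filter.Tendsto (fun n => H.inner (u n) z) Filter.atTop (𝓝 (H.inner x z)) := by
  rw [tendsto_iff_norm_sub_tendsto_zero]
  apply squeeze_zero (fun n => norm_nonneg _) (g := fun n => ‖u n - x‖ * ‖z‖)
  · intro n
    rw [← H.inner_sub_left]
    exact H.norm_inner_le' _ _
  · have := (tendsto_iff_norm_sub_tendsto_zero.mp hu).mul_const ‖z‖
    simpa using this

end HilbertModuleStr

end AuxLemmas

namespace Adj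

variable {𝔄 : Type} [NonUnitalCStarAlgebra 𝔄]
variable {X : Type} [NormedAddCommGroup X] [NormedSpace ℂ X] [CompleteSpace X]
variable {H : HilbertModuleStr 𝔄 X}

theorem map_add' (T : Adj H) (x y : X) : T.toFun (x + y) = T.toFun x + T.toFun y := by
  apply H.eq_of_inner_left
  intro z
  rw [T.inner_adj, H.inner_add_left, H.inner_add_left, T.inner_adj, T.inner_adj]

theorem map_smulC' (T : Adj H) (c : ℂ) (x : X) : T.toFun (c • x) = c • T.toFun x := by
  apply H.eq_of_inner_left
  intro z
  rw [T.inner_adj, H.inner_smulC_left, H.inner_smulC_left, T.inner_adj]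

theorem map_zero' (T : Adj H) : T.toFun 0 = 0 := by
  have h := T.map_add' 0 0
  rw [add_zero] at h
  exact right_eq_add.mp h

theorem map_neg' (T : Adj H) (x : X) : T.toFun (-x) = -T.toFun x := by
  have h : (-x : X) = ((-1 : ℂ) • x) := by simp
  rw [h, T.map_smulC']; simp

theorem map_sub' (T : Adj H) (x y : X) : T.toFun (x - y) = T.toFun x - T.toFun y := by
  rw [sub_eq_add_neg, T.map_add', T.map_neg', sub_eq_add_neg]

theorem map_smulA' (T : Adj H) (x : X) (α : 𝔄) :
    T.toFun (H.smul x α) = H.smul (T.toFun x) α := by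
  apply H.eq_of_inner_left
  intro z
  rw [T.inner_adj, H.inner_smul_left, H.inner_smul_left, T.inner_adj]

/-- The linear map underlying an adjointable operator. -/
noncomputable def toLinear (T : Adj H) : X →ₗ[ℂ] X where
  toFun := T.toFun
  map_add' := T.map_add'
  map_smul' := T.map_smulC'

theorem continuous' (T : Adj H) : Continuous T.toFun := by
  have : Continuous (T.toLinear) := by
    apply LinearMap.continuous_of_seq_closed_graph
    intro u x y hu hTu
    apply H.eq_of_inner_left
    intro z
    have l1 : Filter.Tendsto (fun n => H.inner (T.toFun (u n)) z) Filter.atTop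
        (𝓝 (H.inner y z)) := H.inner_tendsto_left hTu z
    have l2 : Filter.Tendsto (fun n => H.inner (T.toFun (u n)) z) Filter.atTop
        (𝓝 (H.inner (T.toFun x) z)) := by
      have l3 := H.inner_tendsto_left hu (T.adjFun z)
      simp only [← T.inner_adj] at l3
      exact l3
    exact tendsto_nhds_unique l1 l2
  exact this

theorem exists_bound (T : Adj H) : ∃ C : ℝ, 0 ≤ C ∧ ∀ x : X, ‖T.toFun x‖ ≤ C * ‖x‖ := by
  let M : X →L[ℂ] X := ⟨T.toLinear, T.continuous'⟩
  exact ⟨‖M‖, norm_nonneg M, fun x => M.le_opNorm x⟩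

theorem norm_def (T : Adj H) : ‖T‖ = ⨆ x : X, ‖T.toFun x‖ / ‖x‖ := rfl

theorem bddAbove' (T : Adj H) : BddAbove (Set.range fun x : X => ‖T.toFun x‖ / ‖x‖) := by
  obtain ⟨C, hC0, hC⟩ := T.exists_bound
  refine ⟨C, ?_⟩
  rintro - ⟨x, rfl⟩
  rcases eq_or_ne x 0 with rfl | hx
  · simp [T.map_zero', hC0]
  · rw [div_le_iff₀ (norm_pos_iff.mpr hx)]
    exact hC x

theorem norm_nonneg' (T : Adj H) : 0 ≤ ‖T‖ := by
  have h := le_ciSup T.bddAbove' (0 : X)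
  simpa [T.map_zero', norm_def] using h

theorem norm_le' (T : Adj H) {C : ℝ} (hC : 0 ≤ C) (h : ∀ x : X, ‖T.toFun x‖ ≤ C * ‖x‖) :
    ‖T‖ ≤ C := by
  apply Real.iSup_le _ hC
  intro x
  rcases eq_or_ne x 0 with rfl | hx
  · simp [T.map_zero', hC]
  · rw [div_le_iff₀ (norm_pos_iff.mpr hx)]
    exact h x

theorem le_norm' (T : Adj H) (x : X) : ‖T.toFun x‖ ≤ ‖T‖ * ‖x‖ := by
  rcases eq_or_ne x 0 with rfl | hx
  · simp [T.map_zero']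
  · rw [← div_le_iff₀ (norm_pos_iff.mpr hx)]
    exact le_ciSup T.bddAbove' x

theorem adjFun_eq (P : Adj H) (hP : IsProjection P) : P.adjFun = P.toFun :=
  congrArg Adj.toFun hP.2

theorem idem (P : Adj H) (hP : IsProjection P) (x : X) : P.toFun (P.toFun x) = P.toFun x :=
  congrFun (congrArg Adj.toFun hP.1) x

theorem proj_contractive (P : Adj H) (hP : IsProjection P) (x : X) :
    ‖P.toFun x‖ ≤ ‖x‖ := by
  have h1 : H.inner (P.toFun x) (P.toFun x) = H.inner x (P.toFun x) := by
    rw [P.inner_adj, P.adjFun_eq hP, P.idem hP]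
  have h2 : ‖P.toFun x‖ ^ 2 ≤ ‖x‖ * ‖P.toFun x‖ := by
    rw [H.norm_inner, h1]
    exact H.norm_inner_le' x (P.toFun x)
  rcases eq_or_ne ‖P.toFun x‖ 0 with h0 | h0
  · rw [h0]; exact norm_nonneg x
  · have hpos : 0 < ‖P.toFun x‖ := lt_of_le_of_ne (norm_nonneg _) (Ne.symm h0)
    nlinarith

theorem comm_bound (P T D : Adj H) (hP : IsProjection P) :
    ‖P * T - T * P‖ ≤ ‖P * D - D * P‖ + 2 * ‖T - D‖ := by
  have hnn : 0 ≤ ‖P * D - D * P‖ + 2 * ‖T - D‖ := by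
    have := (P * D - D * P).norm_nonneg'
    have := (T - D).norm_nonneg'
    linarith
  apply (P * T - T * P).norm_le' hnn
  intro x
  have e : (P * T - T * P).toFun x
      = (P * D - D * P).toFun x
        + (P.toFun ((T - D).toFun x) - (T - D).toFun (P.toFun x)) := by
    show P.toFun (T.toFun x) - T.toFun (P.toFun x)
      = (P.toFun (D.toFun x) - D.toFun (P.toFun x))
        + (P.toFun (T.toFun x - D.toFun x) - (T.toFun (P.toFun x) - D.toFun (P.toFun x)))
    rw [P.map_sub']
    abel
  rw [e]
  calc ‖(P * D - D * P).toFun x + (P.toFun ((T - D).toFun x) - (T - D).toFun (P.toFun x))‖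
      ≤ ‖(P * D - D * P).toFun x‖ + (‖P.toFun ((T - D).toFun x)‖ + ‖(T - D).toFun (P.toFun x)‖) :=
        (norm_add_le _ _).trans (by gcongr; exact norm_sub_le _ _)
    _ ≤ ‖P * D - D * P‖ * ‖x‖ + (‖T - D‖ * ‖x‖ + ‖T - D‖ * ‖x‖) := by
        gcongr
        · exact (P * D - D * P).le_norm' x
        · exact (P.proj_contractive hP _).trans ((T - D).le_norm' x)
        · exact ((T - D).le_norm' _).trans (by
            have := (T - D).norm_nonneg'
            have := P.proj_contractive hP x
            nlinarith)
    _ = (‖P * D - D * P‖ + 2 * ‖T - D‖) * ‖x‖ := by ring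

theorem fixes_gen (P : Adj H) {n : ℕ} {v : Fin n → X}
    (hfix : ∀ i, P.toFun (v i) = v i) :
    ∀ x ∈ GenSubmodule H (Set.range v), P.toFun x = x := by
  intro x hx
  have hmem : {w : X | P.toFun w = w} ∈ {S : Set X | IsClosed S ∧ Set.range v ⊆ S ∧ (0 : X) ∈ S ∧
      (∀ x ∈ S, ∀ y ∈ S, x + y ∈ S) ∧
      (∀ (c : ℂ), ∀ x ∈ S, c • x ∈ S) ∧
      (∀ x ∈ S, ∀ α : 𝔄, H.smul x α ∈ S)} := by
    refine ⟨?_, ?_, ?_, ?_, ?_, ?_⟩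
    · have : {w : X | P.toFun w = w} = (fun w => P.toFun w - w) ⁻¹' {0} := by
        ext w; simp [sub_eq_zero]
      rw [this]
      exact IsClosed.preimage (P.continuous'.sub continuous_id) isClosed_singleton
    · rintro - ⟨i, rfl⟩; exact hfix i
    · exact P.map_zero'
    · intro x hx y hy; simp only [Set.mem_setOf_eq] at *; rw [P.map_add', hx, hy]
    · intro c x hx; simp only [Set.mem_setOf_eq] at *; rw [P.map_smulC', hx]
    · intro x hx α; simp only [Set.mem_setOf_eq] at *; rw [P.map_smulA', hx]
  exact Set.sInter_subset_of_mem hmem hx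

end Adj

/-- Let `Y` be a countably generated Hilbert `𝔄`-module and
`Ω ⊆ B(Y)` norm separable and quasidiagonal.  Then there is an increasing sequence
`(Pₙ)` of finite rank projections converging strongly to the identity such that
`‖[Pₙ, T]‖ → 0` for every `T ∈ Ω`. -/
theorem exists_quasidiagonalizing_projections
    {𝔄 : Type} [NonUnitalCStarAlgebra 𝔄]
    {X : Type} [NormedAddCommGroup X] [NormedSpace ℂ X] [CompleteSpace X]
    (H : HilbertModuleStr 𝔄 X) (hcg : CountablyGenerated H)
    (Ω : Set (Adj H))
    (hsep : ∃ D : ℕ → Adj H, ∀ T ∈ Ω, ∀ ε : ℝ, 0 < ε → ∃ n, D n ∈ Ω ∧ ‖T - D n‖ < ε)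
    (hqd : QDSet Ω) :
    ∃ P : ℕ → Adj H,
      (∀ n, IsProjection (P n)) ∧ (∀ n, IsFiniteRank (P n)) ∧
      (∀ n, P n * P (n + 1) = P n ∧ P (n + 1) * P n = P n) ∧
      (∀ x : X, Filter.Tendsto (fun n => (P n).toFun x) Filter.atTop (𝓝 x)) ∧
      (∀ T ∈ Ω, Filter.Tendsto (fun n => ‖P n * T - T * P n‖) Filter.atTop (𝓝 (0 : ℝ))) := by
  classical
  obtain ⟨g, hg⟩ := hcg
  obtain ⟨D, hD⟩ := hsep
  have hzero_proj : IsProjection (0 : Adj H) := ⟨Adj.ext' rfl rfl, Adj.ext' rfl rfl⟩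
  have hzero_fr : IsFiniteRank (0 : Adj H) := by
    refine ⟨0, Fin.elim0, ?_⟩
    have h1 : Set.range (0 : Adj H).toFun = {0} := by
      show Set.range (fun _ : X => (0 : X)) = {0}
      exact Set.range_const
    have h2 : GenSubmodule H (Set.range (Fin.elim0 : Fin 0 → X)) = {0} := by
      apply subset_antisymm
      · apply Set.sInter_subset_of_mem
        refine ⟨isClosed_singleton, ?_, rfl, ?_, ?_, ?_⟩
        · rintro - ⟨i, -⟩; exact i.elim0
        · intro x hx y hy
          simp only [Set.mem_singleton_iff] at *
          rw [hx, hy, add_zero]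
        · intro c x hx
          simp only [Set.mem_singleton_iff] at *
          rw [hx, smul_zero]
        · intro x hx α
          simp only [Set.mem_singleton_iff] at *
          rw [hx, H.zero_smul']
      · intro x hx
        simp only [Set.mem_singleton_iff] at hx
        subst hx
        exact Set.mem_sInter.mpr fun S hS => hS.2.2.1
    rw [h1, h2]
  -- the inductive step
  have key : ∀ (n : ℕ) (Q : Adj H), IsProjection Q → IsFiniteRank Q →
      ∃ P : Adj H, (IsProjection P ∧ IsFiniteRank P ∧
        (∀ k, k ≤ n → P.toFun (g k) = g k) ∧
        (∀ j, j ≤ n → D j ∈ Ω → ‖P * D j - D j * P‖ < 1 / (n + 1))) ∧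
        (Q * P = Q ∧ P * Q = Q) := by
    intro n Q hQp hQf
    obtain ⟨m, v, hv⟩ := hQf
    set s : Finset ℕ := (Finset.range (n + 1)).filter (fun j => D j ∈ Ω) with hs
    let e := s.equivFin
    have hT : ∀ i : Fin s.card, D ((e.symm i : ℕ)) ∈ Ω := fun i =>
      (Finset.mem_filter.mp (e.symm i).2).2
    have hε : (0:ℝ) < 1 / (n + 1) := by positivity
    obtain ⟨P, hPp, hPf, hPcomm, hPfix⟩ :=
      hqd s.card ((n + 1) + m) (fun i => D ((e.symm i : ℕ))) hT
        (Fin.append (fun k : Fin (n + 1) => g k) v) (1 / (n + 1)) hε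
    have hfixg : ∀ k, k ≤ n → P.toFun (g k) = g k := by
      intro k hk
      have := hPfix (Fin.castAdd m ⟨k, Nat.lt_succ_of_le hk⟩)
      rwa [Fin.append_left] at this
    have hfixv : ∀ i, P.toFun (v i) = v i := by
      intro i
      have := hPfix (Fin.natAdd (n + 1) i)
      rwa [Fin.append_right] at this
    have hfixQ : ∀ x : X, P.toFun (Q.toFun x) = Q.toFun x := by
      intro x
      apply P.fixes_gen hfixv
      rw [← hv]
      exact ⟨x, rfl⟩
    have hQadj := Q.adjFun_eq hQp
    have hPadj := P.adjFun_eq hPp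
    have hQP : ∀ x : X, Q.toFun (P.toFun x) = Q.toFun x := by
      intro x
      apply H.eq_of_inner_left
      intro z
      calc H.inner (Q.toFun (P.toFun x)) z = H.inner (P.toFun x) (Q.toFun z) := by
            rw [Q.inner_adj, hQadj]
        _ = H.inner x (P.toFun (Q.toFun z)) := by rw [P.inner_adj, hPadj]
        _ = H.inner x (Q.toFun z) := by rw [hfixQ]
        _ = H.inner (Q.toFun x) z := by rw [Q.inner_adj, hQadj]
    have hcomm : ∀ j, j ≤ n → D j ∈ Ω → ‖P * D j - D j * P‖ < 1 / (n + 1) := by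
      intro j hj hjΩ
      have hjs : j ∈ s := Finset.mem_filter.mpr
        ⟨Finset.mem_range.mpr (Nat.lt_succ_of_le hj), hjΩ⟩
      have := hPcomm (e ⟨j, hjs⟩)
      rwa [Equiv.symm_apply_apply] at this
    refine ⟨P, ⟨hPp, hPf, hfixg, hcomm⟩, ?_, ?_⟩
    · apply Adj.ext'
      · funext x; exact hQP x
      · funext x
        show P.adjFun (Q.adjFun x) = Q.adjFun x
        rw [hPadj, hQadj]; exact hfixQ x
    · apply Adj.ext'
      · funext x; exact hfixQ x
      · funext x
        show Q.adjFun (P.adjFun x) = Q.adjFun x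
        rw [hPadj, hQadj]; exact hQP x
  -- recursive construction
  let Pred : ℕ → Adj H → Prop := fun n P =>
    IsProjection P ∧ IsFiniteRank P ∧ (∀ k, k ≤ n → P.toFun (g k) = g k) ∧
      (∀ j, j ≤ n → D j ∈ Ω → ‖P * D j - D j * P‖ < 1 / (n + 1))
  let step : (n : ℕ) → (prev : {P : Adj H // Pred n P}) →
      {P : Adj H // Pred (n + 1) P ∧ (prev.1 * P = prev.1 ∧ P * prev.1 = prev.1)} :=
    fun n prev =>
      ⟨(key (n + 1) prev.1 prev.2.1 prev.2.2.1).choose,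
        (key (n + 1) prev.1 prev.2.1 prev.2.2.1).choose_spec.1,
        (key (n + 1) prev.1 prev.2.1 prev.2.2.1).choose_spec.2⟩
  let base : {P : Adj H // Pred 0 P} :=
    ⟨(key 0 0 hzero_proj hzero_fr).choose, (key 0 0 hzero_proj hzero_fr).choose_spec.1⟩
  let G : (n : ℕ) → {P : Adj H // Pred n P} :=
    fun n => Nat.rec base (fun n ih => ⟨(step n ih).1, (step n ih).2.1⟩) n
  have hGsucc : ∀ n, (G (n + 1)).1 = (step n (G n)).1 := fun n => rfl
  refine ⟨fun n => (G n).1, fun n => (G n).2.1, fun n => (G n).2.2.1, ?_, ?_, ?_⟩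
  · intro n
    show (G n).1 * (G (n+1)).1 = (G n).1 ∧ (G (n+1)).1 * (G n).1 = (G n).1
    rw [hGsucc n]
    exact (step n (G n)).2.2
  · -- strong convergence to the identity
    have hfix : ∀ k n, k ≤ n → (G n).1.toFun (g k) = g k := fun k n hk => (G n).2.2.2.1 k hk
    have hsub : GenSubmodule H (Set.range g) ⊆
        {x : X | Filter.Tendsto (fun n => (G n).1.toFun x) Filter.atTop (𝓝 x)} := by
      apply Set.sInter_subset_of_mem
      refine ⟨?_, ?_, ?_, ?_, ?_, ?_⟩
      · apply isClosed_of_closure_subset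
        intro x hx
        simp only [Set.mem_setOf_eq]
        rw [Metric.tendsto_atTop]
        intro ε hε
        obtain ⟨y, hyS, hxy⟩ := Metric.mem_closure_iff.mp hx (ε/3) (by linarith)
        obtain ⟨N, hN⟩ := Metric.tendsto_atTop.mp hyS (ε/3) (by linarith)
        refine ⟨N, fun n hn => ?_⟩
        have hc : dist ((G n).1.toFun x) ((G n).1.toFun y) ≤ dist x y := by
          rw [dist_eq_norm, ← (G n).1.map_sub', dist_eq_norm]
          exact (G n).1.proj_contractive (G n).2.1 _
        have h4 := dist_triangle4 ((G n).1.toFun x) ((G n).1.toFun y) y x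
        have h5 := hN n hn
        have h6 : dist y x < ε/3 := by rw [dist_comm]; exact hxy
        linarith
      · rintro - ⟨k, rfl⟩
        simp only [Set.mem_setOf_eq]
        apply Filter.Tendsto.congr' _ tendsto_const_nhds
        filter_upwards [Filter.eventually_ge_atTop k] with n hn
        exact (hfix k n hn).symm
      · simp only [Set.mem_setOf_eq]
        have h0 : ∀ n, (G n).1.toFun 0 = 0 := fun n => (G n).1.map_zero'
        exact Filter.Tendsto.congr (fun n => (h0 n).symm) tendsto_const_nhds
      · intro x hx y hy
        simp only [Set.mem_setOf_eq] at *
        exact Filter.Tendsto.congr (fun n => ((G n).1.map_add' x y).symm) (hx.add hy)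
      · intro c x hx
        simp only [Set.mem_setOf_eq] at *
        exact Filter.Tendsto.congr (fun n => ((G n).1.map_smulC' c x).symm) (hx.const_smul c)
      · intro x hx α
        simp only [Set.mem_setOf_eq] at *
        rw [tendsto_iff_norm_sub_tendsto_zero]
        apply squeeze_zero (fun n => norm_nonneg _)
          (g := fun n => ‖(G n).1.toFun x - x‖ * ‖α‖)
        · intro n
          rw [(G n).1.map_smulA', ← H.sub_smul']
          exact H.norm_smul_le' _ _
        · simpa using (tendsto_iff_norm_sub_tendsto_zero.mp hx).mul_const ‖α‖
    intro x
    have hx : x ∈ GenSubmodule H (Set.range g) := by rw [hg]; trivial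
    exact hsub hx
  · -- commutator norms tend to zero
    intro T hT
    rw [Metric.tendsto_atTop]
    intro ε hε
    obtain ⟨k, hkΩ, hk⟩ := hD T hT (ε/4) (by linarith)
    obtain ⟨M, hM⟩ := exists_nat_gt (4/ε)
    refine ⟨max k M, fun n hn => ?_⟩
    have hnk : k ≤ n := le_trans (le_max_left _ _) hn
    have hnM : M ≤ n := le_trans (le_max_right _ _) hn
    have hcommn := (G n).2.2.2.2 k hnk hkΩ
    have hcb := Adj.comm_bound (G n).1 T (D k) (G n).2.1
    have h1n : (1 : ℝ)/(n+1) < ε/4 := by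
      have hM' : (4:ℝ)/ε < (n:ℝ) + 1 := by
        have : (M:ℝ) ≤ (n:ℝ) := by exact_mod_cast hnM
        linarith
      rw [div_lt_iff₀ hε] at hM'
      rw [div_lt_div_iff₀ (by positivity) (by norm_num : (0:ℝ) < 4)]
      nlinarith
    have hnn := ((G n).1 * T - T * (G n).1).norm_nonneg'
    rw [Real.dist_eq, sub_zero, abs_of_nonneg hnn]
    calc ‖(G n).1 * T - T * (G n).1‖
        ≤ ‖(G n).1 * D k - D k * (G n).1‖ + 2 * ‖T - D k‖ := hcb
      _ < 1/(n+1) + 2*(ε/4) := by linarith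
      _ < ε/4 + ε/2 := by linarith
      _ = 3*ε/4 := by ring
      _ < ε := by linarith
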